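/- Let H₁ and H₂ be self-adjoint operators on the same finite-dimensional inner product space, let E ∈ ℝ not be an eigenvalue of H₁ or H₂, and set r = rank(H₁ − H₂). Then |log|det(H₁ − E)| − log|det(H₂ − E)|| ≤ 4r · max_{i∈{1,2}} max( log⁺(|E| + ‖H_i‖), log⁻ dist(E, spec H_i) ). -/

import Mathlib

set_option maxHeartbeats 1000000

open Real Module ContinuousLinearMap

theorem aux_det_le {m : ℕ} (T : EuclideanSpace ℝ (Fin m) →L[ℝ] EuclideanSpace ℝ (Fin m))
    (c : ℝ) (hc : 0 ≤ c) (hT : ‖T‖ ≤ c) :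
    |LinearMap.det (T : EuclideanSpace ℝ (Fin m) →ₗ[ℝ] EuclideanSpace ℝ (Fin m))| ≤ c ^ m := by
  set S : EuclideanSpace ℝ (Fin m) →L[ℝ] EuclideanSpace ℝ (Fin m) := adjoint T * T with hS
  have hSsa : IsSelfAdjoint S := by
    rw [IsSelfAdjoint, hS, star_mul, ContinuousLinearMap.star_eq_adjoint,
      ContinuousLinearMap.star_eq_adjoint, adjoint_adjoint]
  have hSym : (S : EuclideanSpace ℝ (Fin m) →ₗ[ℝ] EuclideanSpace ℝ (Fin m)).IsSymmetric :=
    hSsa.isSymmetric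
  have hn : finrank ℝ (EuclideanSpace ℝ (Fin m)) = m := finrank_euclideanSpace_fin
  set b := hSym.eigenvectorBasis hn
  set μ := hSym.eigenvalues hn
  have hdiag : LinearMap.toMatrix b.toBasis b.toBasis
      (S : EuclideanSpace ℝ (Fin m) →ₗ[ℝ] EuclideanSpace ℝ (Fin m)) = Matrix.diagonal μ := by
    ext i j
    rw [LinearMap.toMatrix_apply, Matrix.diagonal]
    simp only [OrthonormalBasis.coe_toBasis, ContinuousLinearMap.coe_coe]
    have : S (b j) = (μ j : ℝ) • b j := hSym.apply_eigenvectorBasis hn j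
    rw [this]
    simp only [map_smul, OrthonormalBasis.coe_toBasis_repr_apply, OrthonormalBasis.repr_self]
    by_cases h : i = j
    · subst h; simp [EuclideanSpace.single_apply]
    · simp [EuclideanSpace.single_apply, h, Ne.symm h]
  have hdetS : LinearMap.det (S : EuclideanSpace ℝ (Fin m) →ₗ[ℝ] EuclideanSpace ℝ (Fin m))
      = ∏ i, μ i := by
    rw [← LinearMap.det_toMatrix b.toBasis, hdiag, Matrix.det_diagonal]
  have hμ : ∀ i, 0 ≤ μ i ∧ μ i ≤ c ^ 2 := by
    intro i
    have h2 : S (b i) = (μ i : ℝ) • b i := hSym.apply_eigenvectorBasis hn i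
    have hbb : (inner ℝ (b i) (b i) : ℝ) = 1 := by
      have := orthonormal_iff_ite.mp b.orthonormal i i
      simpa using this
    have h3 : (inner ℝ (b i) (S (b i)) : ℝ) = μ i := by
      rw [h2, real_inner_smul_right, hbb, mul_one]
    have h4 : (inner ℝ (b i) (S (b i)) : ℝ) = ‖T (b i)‖ ^ 2 := by
      rw [hS]
      show (inner ℝ (b i) ((adjoint T) (T (b i))) : ℝ) = _
      rw [ContinuousLinearMap.adjoint_inner_right, real_inner_self_eq_norm_sq]
    have h1 : μ i = ‖T (b i)‖ ^ 2 := by rw [← h3, h4]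
    constructor
    · rw [h1]; positivity
    · rw [h1]
      have := T.le_opNorm (b i)
      have hb1 : ‖b i‖ = 1 := b.orthonormal.1 i
      rw [hb1, mul_one] at this
      nlinarith [norm_nonneg (T (b i))]
  have hprod : (∏ i, μ i) ≤ (c ^ 2) ^ m := by
    calc (∏ i, μ i) ≤ ∏ _i : Fin m, c ^ 2 :=
          Finset.prod_le_prod (fun i _ => (hμ i).1) (fun i _ => (hμ i).2)
    _ = (c ^ 2) ^ m := by simp
  have hadj : ((adjoint T : EuclideanSpace ℝ (Fin m) →L[ℝ] EuclideanSpace ℝ (Fin m)) :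
      EuclideanSpace ℝ (Fin m) →ₗ[ℝ] EuclideanSpace ℝ (Fin m)) =
      LinearMap.adjoint (T : EuclideanSpace ℝ (Fin m) →ₗ[ℝ] EuclideanSpace ℝ (Fin m)) := by
    rw [LinearMap.adjoint_eq_toCLM_adjoint]
    rfl
  have hdetadj : LinearMap.det ((adjoint T : EuclideanSpace ℝ (Fin m) →L[ℝ]
      EuclideanSpace ℝ (Fin m)) : EuclideanSpace ℝ (Fin m) →ₗ[ℝ] EuclideanSpace ℝ (Fin m)) =
      LinearMap.det (T : EuclideanSpace ℝ (Fin m) →ₗ[ℝ] EuclideanSpace ℝ (Fin m)) := by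
    rw [hadj]
    set bb := EuclideanSpace.basisFun (Fin m) ℝ
    rw [← LinearMap.det_toMatrix bb.toBasis, ← LinearMap.det_toMatrix bb.toBasis
      (T : EuclideanSpace ℝ (Fin m) →ₗ[ℝ] EuclideanSpace ℝ (Fin m)),
      LinearMap.toMatrix_adjoint]
    rw [Matrix.det_conjTranspose]
    simp
  have hdetT2 : LinearMap.det (S : EuclideanSpace ℝ (Fin m) →ₗ[ℝ] EuclideanSpace ℝ (Fin m))
      = (LinearMap.det (T : EuclideanSpace ℝ (Fin m) →ₗ[ℝ] EuclideanSpace ℝ (Fin m))) ^ 2 := by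
    have : (S : EuclideanSpace ℝ (Fin m) →ₗ[ℝ] EuclideanSpace ℝ (Fin m)) =
        ((adjoint T : EuclideanSpace ℝ (Fin m) →L[ℝ] EuclideanSpace ℝ (Fin m)) :
          EuclideanSpace ℝ (Fin m) →ₗ[ℝ] EuclideanSpace ℝ (Fin m)).comp
        (T : EuclideanSpace ℝ (Fin m) →ₗ[ℝ] EuclideanSpace ℝ (Fin m)) := rfl
    rw [this, LinearMap.det_comp, hdetadj, sq]
  have h0 : (LinearMap.det (T : EuclideanSpace ℝ (Fin m) →ₗ[ℝ] EuclideanSpace ℝ (Fin m))) ^ 2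
      ≤ (c ^ m) ^ 2 := by
    rw [← hdetT2, hdetS]
    calc _ ≤ (c^2)^m := hprod
    _ = (c ^ m) ^ 2 := by ring
  calc |LinearMap.det (T : EuclideanSpace ℝ (Fin m) →ₗ[ℝ] EuclideanSpace ℝ (Fin m))|
      = Real.sqrt ((LinearMap.det (T : EuclideanSpace ℝ (Fin m) →ₗ[ℝ]
          EuclideanSpace ℝ (Fin m))) ^ 2) := (Real.sqrt_sq_eq_abs _).symm
    _ ≤ Real.sqrt ((c ^ m) ^ 2) := Real.sqrt_le_sqrt h0
    _ = c ^ m := Real.sqrt_sq (by positivity)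

theorem aux_det_le_rank {m : ℕ} (A : EuclideanSpace ℝ (Fin m) →L[ℝ] EuclideanSpace ℝ (Fin m))
    (c : ℝ) (hc : 0 ≤ c) (hA : ‖A‖ ≤ c) :
    |LinearMap.det (A : EuclideanSpace ℝ (Fin m) →ₗ[ℝ] EuclideanSpace ℝ (Fin m))| ≤
      c ^ (finrank ℝ (LinearMap.range
        ((A : EuclideanSpace ℝ (Fin m) →ₗ[ℝ] EuclideanSpace ℝ (Fin m)) - LinearMap.id))) := by
  set V := EuclideanSpace ℝ (Fin m)
  set B : V →ₗ[ℝ] V := (A : V →ₗ[ℝ] V) - LinearMap.id with hB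
  set K : Submodule ℝ V := LinearMap.ker B with hK
  set k : ℕ := finrank ℝ K
  set r : ℕ := finrank ℝ (LinearMap.range B)
  have hkr : r + k = m := by
    have := LinearMap.finrank_range_add_finrank_ker B
    rwa [finrank_euclideanSpace_fin] at this
  -- adapted orthonormal basis
  set b₀ := stdOrthonormalBasis ℝ K
  set v : Fin k ⊕ Fin r → V := Sum.elim (fun i => (b₀ i : V)) (fun _ => 0) with hv
  have hcard : finrank ℝ V = Fintype.card (Fin k ⊕ Fin r) := by
    simp [V, finrank_euclideanSpace_fin]
    omega
  have honb : Orthonormal ℝ (fun i : Fin k => ((b₀ i : K) : V)) := by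
    rw [orthonormal_iff_ite]
    intro i j
    have := orthonormal_iff_ite.mp b₀.orthonormal i j
    rwa [Submodule.coe_inner] at this
  have hrest : Orthonormal ℝ ((Set.range (Sum.inl : Fin k → Fin k ⊕ Fin r)).restrict v) := by
    have : (Set.range (Sum.inl : Fin k → Fin k ⊕ Fin r)).restrict v =
        (fun i : Fin k => ((b₀ i : K) : V)) ∘
          (Equiv.ofInjective Sum.inl Sum.inl_injective).symm := by
      funext p
      obtain ⟨x, hx⟩ := p
      obtain ⟨i, rfl⟩ := hx
      have he : (Equiv.ofInjective (Sum.inl : Fin k → Fin k ⊕ Fin r)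
            Sum.inl_injective).symm ⟨Sum.inl i, Set.mem_range_self i⟩ = i :=
        Equiv.ofInjective_symm_apply _ _
      show v (Sum.inl i) = _
      simp only [Function.comp_apply, he, hv, Sum.elim_inl]
    rw [this]
    exact honb.comp _ (Equiv.injective _)
  obtain ⟨b, hb⟩ := hrest.exists_orthonormalBasis_extension_of_card_eq hcard
  have hbK : ∀ i, b (Sum.inl i) ∈ K := by
    intro i
    rw [hb _ (Set.mem_range_self i)]
    exact SetLike.coe_mem _
  have hfix : ∀ i : Fin k, (A : V →ₗ[ℝ] V) (b (Sum.inl i)) = b (Sum.inl i) := by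
    intro i
    have h0 : B (b (Sum.inl i)) = 0 := hbK i
    rw [hB, LinearMap.sub_apply, LinearMap.id_apply, sub_eq_zero] at h0
    exact h0
  set M := LinearMap.toMatrix b.toBasis b.toBasis (A : V →ₗ[ℝ] V) with hM
  have hcol : ∀ (i : Fin k ⊕ Fin r) (j : Fin k), M i (Sum.inl j) =
      if i = Sum.inl j then 1 else 0 := by
    intro i j
    rw [hM, LinearMap.toMatrix_apply]
    simp only [OrthonormalBasis.coe_toBasis]
    rw [hfix j]
    simp [OrthonormalBasis.coe_toBasis_repr_apply, OrthonormalBasis.repr_self,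
      EuclideanSpace.single_apply]
  have h11 : M.toBlocks₁₁ = 1 := by
    ext i j
    simp [Matrix.toBlocks₁₁, hcol, Matrix.one_apply]
  have h21 : M.toBlocks₂₁ = 0 := by
    ext i j
    simp [Matrix.toBlocks₂₁, hcol]
  have hblocks : M = Matrix.fromBlocks 1 (M.toBlocks₁₂) 0 (M.toBlocks₂₂) := by
    conv_lhs => rw [← Matrix.fromBlocks_toBlocks M, h11, h21]
  set Y := M.toBlocks₂₂ with hY
  have hdetY : LinearMap.det (A : V →ₗ[ℝ] V) = Y.det := by
    rw [← LinearMap.det_toMatrix b.toBasis (A : V →ₗ[ℝ] V), ← hM, hblocks,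
      Matrix.det_fromBlocks_zero₂₁]
    simp
  -- the compressed operator
  set T : EuclideanSpace ℝ (Fin r) →L[ℝ] EuclideanSpace ℝ (Fin r) :=
    LinearMap.toContinuousLinearMap (Matrix.toEuclideanLin Y) with hT
  have hdetT : LinearMap.det
      ((T : EuclideanSpace ℝ (Fin r) →L[ℝ] EuclideanSpace ℝ (Fin r)) :
        EuclideanSpace ℝ (Fin r) →ₗ[ℝ] EuclideanSpace ℝ (Fin r)) = Y.det := by
    have h1 : ((T : EuclideanSpace ℝ (Fin r) →L[ℝ] EuclideanSpace ℝ (Fin r)) :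
        EuclideanSpace ℝ (Fin r) →ₗ[ℝ] EuclideanSpace ℝ (Fin r)) =
        Matrix.toEuclideanLin Y := rfl
    have h2 : Matrix.toEuclideanLin Y =
        (WithLp.linearEquiv 2 ℝ (Fin r → ℝ)).symm.conj (Matrix.toLin' Y) := rfl
    rw [h1, h2, LinearEquiv.conj_apply, LinearMap.comp_assoc, LinearMap.det_conj, LinearMap.det_toLin']
  have hTy : ∀ (y : EuclideanSpace ℝ (Fin r)) (i : Fin r), T y i = ∑ j, Y i j * y j := by
    intro y i
    show Matrix.toEuclideanLin Y y i = _
    rw [Matrix.toEuclideanLin_apply]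
    rw [PiLp.toLp_apply]
    simp [Matrix.mulVec, dotProduct]
  have hnormT : ‖T‖ ≤ c := by
    refine ContinuousLinearMap.opNorm_le_bound _ hc (fun y => ?_)
    set z : EuclideanSpace ℝ (Fin k ⊕ Fin r) :=
      (WithLp.equiv 2 _).symm (Sum.elim (fun _ => (0:ℝ)) (fun j => y j)) with hz
    have hzap : ∀ p, z p = Sum.elim (fun _ => (0:ℝ)) (fun j => y j) p := fun p => rfl
    set x : V := b.repr.symm z with hx
    have hxy : ‖x‖ = ‖y‖ := by
      rw [hx, LinearIsometryEquiv.norm_map]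
      rw [EuclideanSpace.norm_eq, EuclideanSpace.norm_eq]
      congr 1
      rw [Fintype.sum_sum_type]
      simp [hzap]
    have hrepr : ∀ i : Fin r, T y i = b.repr ((A : V →ₗ[ℝ] V) x) (Sum.inr i) := by
      intro i
      have hxsum : x = ∑ p, z p • b p := (b.sum_repr_symm z).symm
      have hAx2 : (A : V →ₗ[ℝ] V) x = ∑ p, z p • (A : V →ₗ[ℝ] V) (b p) := by
        rw [hxsum, map_sum]
        simp [map_smul]
      have hM' : ∀ p, b.repr ((A : V →ₗ[ℝ] V) (b p)) (Sum.inr i) = M (Sum.inr i) p := by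
        intro p
        rw [hM, LinearMap.toMatrix_apply]
        simp [OrthonormalBasis.coe_toBasis, OrthonormalBasis.coe_toBasis_repr_apply]
      have hsum : b.repr ((A : V →ₗ[ℝ] V) x) (Sum.inr i)
          = ∑ p, z p * M (Sum.inr i) p := by
        rw [hAx2, map_sum]
        have happ : (∑ p, b.repr (z p • (A : V →ₗ[ℝ] V) (b p))) (Sum.inr i)
            = ∑ p, (b.repr (z p • (A : V →ₗ[ℝ] V) (b p))) (Sum.inr i) := by
          rw [WithLp.ofLp_sum]; exact Finset.sum_apply _ _ _
        rw [happ]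
        refine Finset.sum_congr rfl (fun p _ => ?_)
        rw [map_smul, ← hM']
        rfl
      rw [hsum, Fintype.sum_sum_type]
      have hinl : ∀ (q : Fin k), z (Sum.inl q) * M (Sum.inr i) (Sum.inl q) = 0 := by
        intro q
        rw [hzap (Sum.inl q)]
        show (0:ℝ) * _ = 0
        rw [zero_mul]
      rw [Finset.sum_congr rfl (fun q _ => hinl q), Finset.sum_const_zero, zero_add]
      rw [hTy]
      refine Finset.sum_congr rfl (fun j _ => ?_)
      rw [hzap (Sum.inr j)]
      show Y i j * y j = y j * M (Sum.inr i) (Sum.inr j)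
      rw [mul_comm]
      rfl
    have hstep : ‖T y‖ ≤ ‖(A : V →ₗ[ℝ] V) x‖ := by
      have hAx : ‖(A : V →ₗ[ℝ] V) x‖ = ‖b.repr ((A : V →ₗ[ℝ] V) x)‖ :=
        (LinearIsometryEquiv.norm_map b.repr _).symm
      rw [hAx, EuclideanSpace.norm_eq, EuclideanSpace.norm_eq]
      apply Real.sqrt_le_sqrt
      rw [Fintype.sum_sum_type]
      have heq : ∑ i, ‖T y i‖^2 = ∑ i, ‖b.repr ((A : V →ₗ[ℝ] V) x) (Sum.inr i)‖^2 :=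
        Finset.sum_congr rfl (fun i _ => by rw [hrepr i])
      rw [heq]
      exact le_add_of_nonneg_left (by positivity)
    calc ‖T y‖ ≤ ‖(A : V →ₗ[ℝ] V) x‖ := hstep
      _ = ‖A x‖ := rfl
      _ ≤ ‖A‖ * ‖x‖ := A.le_opNorm x
      _ ≤ c * ‖x‖ := by
          apply mul_le_mul_of_nonneg_right hA (norm_nonneg x)
      _ = c * ‖y‖ := by rw [hxy]
  calc |LinearMap.det (A : V →ₗ[ℝ] V)| = |Y.det| := by rw [hdetY]
    _ = |LinearMap.det ((T : EuclideanSpace ℝ (Fin r) →L[ℝ] EuclideanSpace ℝ (Fin r)) :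
          EuclideanSpace ℝ (Fin r) →ₗ[ℝ] EuclideanSpace ℝ (Fin r))| := by rw [hdetT]
    _ ≤ c ^ r := aux_det_le T c hc hnormT


theorem aux_spec {n : ℕ} (H : EuclideanSpace ℝ (Fin n) →L[ℝ] EuclideanSpace ℝ (Fin n)) :
    spectrum ℝ H = spectrum ℝ
      ((H : EuclideanSpace ℝ (Fin n) →ₗ[ℝ] EuclideanSpace ℝ (Fin n)) :
        Module.End ℝ (EuclideanSpace ℝ (Fin n))) := by
  rw [← AlgEquiv.spectrum_eq (Module.End.toContinuousLinearMap (EuclideanSpace ℝ (Fin n)))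
    ((H : EuclideanSpace ℝ (Fin n) →ₗ[ℝ] EuclideanSpace ℝ (Fin n)))]
  congr 1

theorem aux_resolvent {n : ℕ} (hn0 : n ≠ 0)
    (H : EuclideanSpace ℝ (Fin n) →L[ℝ] EuclideanSpace ℝ (Fin n))
    (hH : IsSelfAdjoint H) (E : ℝ) (hE : E ∉ spectrum ℝ H) :
    ∃ u : (EuclideanSpace ℝ (Fin n) →L[ℝ] EuclideanSpace ℝ (Fin n))ˣ,
      (↑u = H - E • 1) ∧
      ‖(↑u⁻¹ : EuclideanSpace ℝ (Fin n) →L[ℝ] EuclideanSpace ℝ (Fin n))‖ ≤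
        Real.exp (max (max (Real.log (|E| + ‖H‖)) 0)
          (max (-Real.log (Metric.infDist E (spectrum ℝ H))) 0)) ∧
      ‖(↑u : EuclideanSpace ℝ (Fin n) →L[ℝ] EuclideanSpace ℝ (Fin n))‖ ≤
        Real.exp (max (max (Real.log (|E| + ‖H‖)) 0)
          (max (-Real.log (Metric.infDist E (spectrum ℝ H))) 0)) := by
  set m := max (max (Real.log (|E| + ‖H‖)) 0)
    (max (-Real.log (Metric.infDist E (spectrum ℝ H))) 0) with hm
  set d := Metric.infDist E (spectrum ℝ H) with hd
  have hn : finrank ℝ (EuclideanSpace ℝ (Fin n)) = n := finrank_euclideanSpace_fin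
  have hSym : (H : EuclideanSpace ℝ (Fin n) →ₗ[ℝ] EuclideanSpace ℝ (Fin n)).IsSymmetric :=
    hH.isSymmetric
  set b := hSym.eigenvectorBasis hn
  set μ := hSym.eigenvalues hn
  have hme : ∀ i, μ i ∈ spectrum ℝ H := by
    intro i
    rw [aux_spec]
    exact Module.End.hasEigenvalue_iff_mem_spectrum.mp (hSym.hasEigenvalue_eigenvalues hn i)
  have hdμ : ∀ i, d ≤ |μ i - E| := by
    intro i
    calc d ≤ dist E (μ i) := Metric.infDist_le_dist_of_mem (hme i)
    _ = |μ i - E| := by rw [Real.dist_eq, abs_sub_comm]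
  have hd0 : 0 < d := by
    rw [hd]
    refine ((spectrum.isClosed H).notMem_iff_infDist_pos ⟨μ ⟨0, Nat.pos_of_ne_zero hn0⟩,
      hme _⟩).mp hE
  have hunit : IsUnit (H - E • (1 : EuclideanSpace ℝ (Fin n) →L[ℝ] EuclideanSpace ℝ (Fin n))) := by
    have := spectrum.notMem_iff.mp hE
    have h2 : H - E • (1 : EuclideanSpace ℝ (Fin n) →L[ℝ] EuclideanSpace ℝ (Fin n)) =
        -((algebraMap ℝ _) E - H) := by
      rw [Algebra.algebraMap_eq_smul_one]
      abel
    rw [h2]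
    exact this.neg
  refine ⟨hunit.unit, rfl, ?_, ?_⟩
  · -- resolvent bound
    have hlow : ∀ x, d * ‖x‖ ≤ ‖(H - E • 1) x‖ := by
      intro x
      have hrepr : ∀ i, b.repr ((H - E • 1) x) i = (μ i - E) * b.repr x i := by
        intro i
        have h1 : (H - E • 1) x = H x - E • x := by
          rw [ContinuousLinearMap.sub_apply, ContinuousLinearMap.smul_apply,
            ContinuousLinearMap.one_apply]
        rw [h1, map_sub, map_smul]
        have h2 : b.repr (H x) i = μ i * b.repr x i :=
          hSym.eigenvectorBasis_apply_self_apply hn x i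
        show b.repr (H x) i - E * b.repr x i = _
        rw [h2]
        ring
      have hn1 : ‖(H - E • 1) x‖ = ‖b.repr ((H - E • 1) x)‖ :=
        (LinearIsometryEquiv.norm_map b.repr _).symm
      have hn2 : ‖x‖ = ‖b.repr x‖ := (LinearIsometryEquiv.norm_map b.repr _).symm
      rw [hn1, hn2, EuclideanSpace.norm_eq, EuclideanSpace.norm_eq]
      have hsum : ∀ i, d ^ 2 * ‖b.repr x i‖ ^ 2 ≤ ‖b.repr ((H - E • 1) x) i‖ ^ 2 := by
        intro i
        rw [hrepr i]
        have h3 : d ^ 2 ≤ (μ i - E) ^ 2 := by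
          have := hdμ i
          have h4 : d ^ 2 ≤ |μ i - E| ^ 2 := by nlinarith [hd0.le]
          rwa [sq_abs] at h4
        rw [Real.norm_eq_abs, Real.norm_eq_abs, sq_abs, sq_abs, mul_pow]
        exact mul_le_mul_of_nonneg_right h3 (sq_nonneg _)
      calc d * √(∑ i, ‖b.repr x i‖ ^ 2)
          = √(d ^ 2 * ∑ i, ‖b.repr x i‖ ^ 2) := by
            rw [Real.sqrt_mul (sq_nonneg d), Real.sqrt_sq hd0.le]
        _ = √(∑ i, d ^ 2 * ‖b.repr x i‖ ^ 2) := by rw [Finset.mul_sum]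
        _ ≤ √(∑ i, ‖b.repr ((H - E • 1) x) i‖ ^ 2) :=
            Real.sqrt_le_sqrt (Finset.sum_le_sum (fun i _ => hsum i))
    refine ContinuousLinearMap.opNorm_le_bound _ (le_of_lt (Real.exp_pos m)) (fun y => ?_)
    have h5 : (H - E • 1) ((↑hunit.unit⁻¹ :
        EuclideanSpace ℝ (Fin n) →L[ℝ] EuclideanSpace ℝ (Fin n)) y) = y := by
      calc (H - E • 1) ((↑hunit.unit⁻¹ :
            EuclideanSpace ℝ (Fin n) →L[ℝ] EuclideanSpace ℝ (Fin n)) y)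
          = ((↑hunit.unit * ↑hunit.unit⁻¹ :
            EuclideanSpace ℝ (Fin n) →L[ℝ] EuclideanSpace ℝ (Fin n))) y := rfl
        _ = (1 : EuclideanSpace ℝ (Fin n) →L[ℝ] EuclideanSpace ℝ (Fin n)) y := by
            rw [hunit.unit.mul_inv]
        _ = y := rfl
    have h6 := hlow ((↑hunit.unit⁻¹ :
        EuclideanSpace ℝ (Fin n) →L[ℝ] EuclideanSpace ℝ (Fin n)) y)
    rw [h5] at h6
    -- d * ‖u⁻¹ y‖ ≤ ‖y‖, want ‖u⁻¹ y‖ ≤ exp m * ‖y‖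
    have hdexp : Real.exp (-m) ≤ d := by
      have h7 : -Real.log d ≤ m := le_trans (le_max_left _ 0) (le_max_right _ _)
      have h8 : -m ≤ Real.log d := by linarith
      calc Real.exp (-m) ≤ Real.exp (Real.log d) := Real.exp_le_exp.mpr h8
      _ = d := Real.exp_log hd0
    have h9 : ‖(↑hunit.unit⁻¹ :
        EuclideanSpace ℝ (Fin n) →L[ℝ] EuclideanSpace ℝ (Fin n)) y‖ * Real.exp (-m) ≤ ‖y‖ := by
      calc ‖(↑hunit.unit⁻¹ : EuclideanSpace ℝ (Fin n) →L[ℝ] EuclideanSpace ℝ (Fin n)) y‖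
            * Real.exp (-m) ≤ ‖(↑hunit.unit⁻¹ :
            EuclideanSpace ℝ (Fin n) →L[ℝ] EuclideanSpace ℝ (Fin n)) y‖ * d := by
            exact mul_le_mul_of_nonneg_left hdexp (norm_nonneg _)
        _ = d * ‖(↑hunit.unit⁻¹ :
            EuclideanSpace ℝ (Fin n) →L[ℝ] EuclideanSpace ℝ (Fin n)) y‖ := mul_comm _ _
        _ ≤ ‖y‖ := h6
      -- conclude
    have h10 : ‖(↑hunit.unit⁻¹ :
        EuclideanSpace ℝ (Fin n) →L[ℝ] EuclideanSpace ℝ (Fin n)) y‖ ≤ ‖y‖ * Real.exp m := by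
      rw [← le_div_iff₀ (Real.exp_pos (-m))] at h9
      rwa [div_eq_mul_inv, ← Real.exp_neg, neg_neg] at h9
    linarith [h10]
  · -- norm bound on u itself
    show ‖H - E • (1 : EuclideanSpace ℝ (Fin n) →L[ℝ] EuclideanSpace ℝ (Fin n))‖ ≤ Real.exp m
    have h11 : ‖H - E • (1 : EuclideanSpace ℝ (Fin n) →L[ℝ] EuclideanSpace ℝ (Fin n))‖ ≤
        |E| + ‖H‖ := by
      calc ‖H - E • (1 : EuclideanSpace ℝ (Fin n) →L[ℝ] EuclideanSpace ℝ (Fin n))‖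
          ≤ ‖H‖ + ‖E • (1 : EuclideanSpace ℝ (Fin n) →L[ℝ] EuclideanSpace ℝ (Fin n))‖ :=
            norm_sub_le _ _
        _ ≤ ‖H‖ + |E| := by
            have : ‖E • (1 : EuclideanSpace ℝ (Fin n) →L[ℝ] EuclideanSpace ℝ (Fin n))‖ ≤ |E| := by
              rw [norm_smul E (1 : EuclideanSpace ℝ (Fin n) →L[ℝ] EuclideanSpace ℝ (Fin n)),
                Real.norm_eq_abs]
              calc |E| * ‖(1 : EuclideanSpace ℝ (Fin n) →L[ℝ] EuclideanSpace ℝ (Fin n))‖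
                  ≤ |E| * 1 := by
                    apply mul_le_mul_of_nonneg_left _ (abs_nonneg E)
                    rw [ContinuousLinearMap.one_def]
                    exact ContinuousLinearMap.norm_id_le
                _ = |E| := mul_one _
            linarith
        _ = |E| + ‖H‖ := add_comm _ _
    have h12 : |E| + ‖H‖ ≤ Real.exp m := by
      rcases eq_or_lt_of_le (by positivity : (0:ℝ) ≤ |E| + ‖H‖) with h | h
    
      · rw [← h]; exact (Real.exp_pos m).le
      · have h13 : Real.log (|E| + ‖H‖) ≤ m := le_trans (le_max_left _ 0) (le_max_left _ _)
        calc |E| + ‖H‖ = Real.exp (Real.log (|E| + ‖H‖)) := (Real.exp_log h).symm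
        _ ≤ Real.exp m := Real.exp_le_exp.mpr h13
    linarith

theorem stmt_19 (n : ℕ)
    (H₁ H₂ : EuclideanSpace ℝ (Fin n) →L[ℝ] EuclideanSpace ℝ (Fin n))
    (h₁ : IsSelfAdjoint H₁) (h₂ : IsSelfAdjoint H₂) (E : ℝ)
    (hE₁ : E ∉ spectrum ℝ H₁) (hE₂ : E ∉ spectrum ℝ H₂) :
    abs (Real.log (abs (LinearMap.det ((H₁ - E • 1 :
        EuclideanSpace ℝ (Fin n) →L[ℝ] EuclideanSpace ℝ (Fin n)) :
        EuclideanSpace ℝ (Fin n) →ₗ[ℝ] EuclideanSpace ℝ (Fin n)))) -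
      Real.log (abs (LinearMap.det ((H₂ - E • 1 :
        EuclideanSpace ℝ (Fin n) →L[ℝ] EuclideanSpace ℝ (Fin n)) :
        EuclideanSpace ℝ (Fin n) →ₗ[ℝ] EuclideanSpace ℝ (Fin n))))) ≤
    4 * (Module.finrank ℝ (LinearMap.range ((H₁ - H₂ :
        EuclideanSpace ℝ (Fin n) →L[ℝ] EuclideanSpace ℝ (Fin n)) :
        EuclideanSpace ℝ (Fin n) →ₗ[ℝ] EuclideanSpace ℝ (Fin n)))) *
      max
        (max (max (Real.log (|E| + ‖H₁‖)) 0)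
          (max (-Real.log (Metric.infDist E (spectrum ℝ H₁))) 0))
        (max (max (Real.log (|E| + ‖H₂‖)) 0)
          (max (-Real.log (Metric.infDist E (spectrum ℝ H₂))) 0)) := by
  set Mx := max
        (max (max (Real.log (|E| + ‖H₁‖)) 0)
          (max (-Real.log (Metric.infDist E (spectrum ℝ H₁))) 0))
        (max (max (Real.log (|E| + ‖H₂‖)) 0)
          (max (-Real.log (Metric.infDist E (spectrum ℝ H₂))) 0)) with hMx
  set r := Module.finrank ℝ (LinearMap.range ((H₁ - H₂ :
        EuclideanSpace ℝ (Fin n) →L[ℝ] EuclideanSpace ℝ (Fin n)) :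
        EuclideanSpace ℝ (Fin n) →ₗ[ℝ] EuclideanSpace ℝ (Fin n))) with hr
  have hM0 : 0 ≤ Mx := le_trans (le_max_right (-Real.log (Metric.infDist E (spectrum ℝ H₁))) 0)
    (le_trans (le_max_right _ _) (le_max_left _ _))
  by_cases hn0 : n = 0
  · subst hn0
    have hfr : finrank ℝ (EuclideanSpace ℝ (Fin 0)) = 0 := by
      rw [finrank_euclideanSpace_fin]
    rw [LinearMap.det_eq_one_of_finrank_eq_zero hfr, LinearMap.det_eq_one_of_finrank_eq_zero hfr]
    simp only [abs_one, Real.log_one, sub_zero, abs_zero]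
    have : (0:ℝ) ≤ (r : ℝ) := Nat.cast_nonneg r
    nlinarith [mul_nonneg this hM0]
  · obtain ⟨u₁, hu₁, hinv₁, hnorm₁⟩ := aux_resolvent hn0 H₁ h₁ E hE₁
    obtain ⟨u₂, hu₂, hinv₂, hnorm₂⟩ := aux_resolvent hn0 H₂ h₂ E hE₂
    have hexp₁ : Real.exp (max (max (Real.log (|E| + ‖H₁‖)) 0)
        (max (-Real.log (Metric.infDist E (spectrum ℝ H₁))) 0)) ≤ Real.exp Mx :=
      Real.exp_le_exp.mpr (le_max_left _ _)
    have hexp₂ : Real.exp (max (max (Real.log (|E| + ‖H₂‖)) 0)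
        (max (-Real.log (Metric.infDist E (spectrum ℝ H₂))) 0)) ≤ Real.exp Mx :=
      Real.exp_le_exp.mpr (le_max_right _ _)
    replace hinv₁ := hinv₁.trans hexp₁
    replace hnorm₁ := hnorm₁.trans hexp₁
    replace hinv₂ := hinv₂.trans hexp₂
    replace hnorm₂ := hnorm₂.trans hexp₂
    set c := Real.exp (2 * Mx) with hc
    have hcsplit : c = Real.exp Mx * Real.exp Mx := by
      rw [hc, two_mul, Real.exp_add]
    have hc0 : (0:ℝ) ≤ c := (Real.exp_pos _).le
    have hc1 : (1:ℝ) ≤ c := Real.one_le_exp (by linarith)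
    set G := (↑u₂⁻¹ : EuclideanSpace ℝ (Fin n) →L[ℝ] EuclideanSpace ℝ (Fin n)) * (↑u₁ :
      EuclideanSpace ℝ (Fin n) →L[ℝ] EuclideanSpace ℝ (Fin n)) with hG
    set G' := (↑u₁⁻¹ : EuclideanSpace ℝ (Fin n) →L[ℝ] EuclideanSpace ℝ (Fin n)) * (↑u₂ :
      EuclideanSpace ℝ (Fin n) →L[ℝ] EuclideanSpace ℝ (Fin n)) with hG'
    have hGnorm : ‖G‖ ≤ c := by
      rw [hcsplit]
      exact (norm_mul_le _ _).trans (mul_le_mul hinv₂ hnorm₁ (norm_nonneg _) (Real.exp_pos _).le)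
    have hG'norm : ‖G'‖ ≤ c := by
      rw [hcsplit]
      exact (norm_mul_le _ _).trans (mul_le_mul hinv₁ hnorm₂ (norm_nonneg _) (Real.exp_pos _).le)
    -- rank bounds
    have hsub : (↑u₁ : EuclideanSpace ℝ (Fin n) →L[ℝ] EuclideanSpace ℝ (Fin n)) - ↑u₂ =
        H₁ - H₂ := by
      rw [hu₁, hu₂, sub_sub_sub_cancel_right]
    have hrank : ∀ (u : (EuclideanSpace ℝ (Fin n) →L[ℝ] EuclideanSpace ℝ (Fin n))ˣ)
        (W : EuclideanSpace ℝ (Fin n) →L[ℝ] EuclideanSpace ℝ (Fin n)),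
        finrank ℝ (LinearMap.range ((((↑u : EuclideanSpace ℝ (Fin n) →L[ℝ]
          EuclideanSpace ℝ (Fin n)) * W) : EuclideanSpace ℝ (Fin n) →L[ℝ]
          EuclideanSpace ℝ (Fin n)) : EuclideanSpace ℝ (Fin n) →ₗ[ℝ] EuclideanSpace ℝ (Fin n)))
        ≤ finrank ℝ (LinearMap.range (W : EuclideanSpace ℝ (Fin n) →ₗ[ℝ]
          EuclideanSpace ℝ (Fin n))) := by
      intro u W
      have : ((((↑u : EuclideanSpace ℝ (Fin n) →L[ℝ] EuclideanSpace ℝ (Fin n)) * W) :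
          EuclideanSpace ℝ (Fin n) →L[ℝ] EuclideanSpace ℝ (Fin n)) :
          EuclideanSpace ℝ (Fin n) →ₗ[ℝ] EuclideanSpace ℝ (Fin n)) =
          ((↑u : EuclideanSpace ℝ (Fin n) →L[ℝ] EuclideanSpace ℝ (Fin n)) :
            EuclideanSpace ℝ (Fin n) →ₗ[ℝ] EuclideanSpace ℝ (Fin n)) ∘ₗ
          (W : EuclideanSpace ℝ (Fin n) →ₗ[ℝ] EuclideanSpace ℝ (Fin n)) := rfl
      rw [this, LinearMap.range_comp]
      exact Submodule.finrank_map_le _ _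
    have hGrank : finrank ℝ (LinearMap.range
        ((G : EuclideanSpace ℝ (Fin n) →ₗ[ℝ] EuclideanSpace ℝ (Fin n)) - LinearMap.id)) ≤ r := by
      have h1 : G - 1 = (↑u₂⁻¹ : EuclideanSpace ℝ (Fin n) →L[ℝ] EuclideanSpace ℝ (Fin n)) *
          (H₁ - H₂) := by
        rw [hG, ← hsub, mul_sub, u₂.inv_mul]
      have h2 : (G : EuclideanSpace ℝ (Fin n) →ₗ[ℝ] EuclideanSpace ℝ (Fin n)) - LinearMap.id =
          (((↑u₂⁻¹ : EuclideanSpace ℝ (Fin n) →L[ℝ] EuclideanSpace ℝ (Fin n)) *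
          (H₁ - H₂)) : EuclideanSpace ℝ (Fin n) →ₗ[ℝ] EuclideanSpace ℝ (Fin n)) := by
        ext x
        have h4 := DFunLike.congr_fun h1 x
        simp only [ContinuousLinearMap.sub_apply, ContinuousLinearMap.one_apply] at h4
        simp only [LinearMap.sub_apply, LinearMap.id_apply, ContinuousLinearMap.coe_coe]
        rw [h4]
        rfl
      rw [h2, hr]
      exact hrank u₂⁻¹ (H₁ - H₂)
    have hG'rank : finrank ℝ (LinearMap.range
        ((G' : EuclideanSpace ℝ (Fin n) →ₗ[ℝ] EuclideanSpace ℝ (Fin n)) - LinearMap.id)) ≤ r := by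
      have h1 : G' - 1 = (↑u₁⁻¹ : EuclideanSpace ℝ (Fin n) →L[ℝ] EuclideanSpace ℝ (Fin n)) *
          (H₂ - H₁) := by
        have hsub' : (↑u₂ : EuclideanSpace ℝ (Fin n) →L[ℝ] EuclideanSpace ℝ (Fin n)) - ↑u₁ =
            H₂ - H₁ := by rw [hu₁, hu₂, sub_sub_sub_cancel_right]
        rw [hG', ← hsub', mul_sub, u₁.inv_mul]
      have h2 : (G' : EuclideanSpace ℝ (Fin n) →ₗ[ℝ] EuclideanSpace ℝ (Fin n)) - LinearMap.id =
          (((↑u₁⁻¹ : EuclideanSpace ℝ (Fin n) →L[ℝ] EuclideanSpace ℝ (Fin n)) *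
          (H₂ - H₁)) : EuclideanSpace ℝ (Fin n) →ₗ[ℝ] EuclideanSpace ℝ (Fin n)) := by
        ext x
        have h4 := DFunLike.congr_fun h1 x
        simp only [ContinuousLinearMap.sub_apply, ContinuousLinearMap.one_apply] at h4
        simp only [LinearMap.sub_apply, LinearMap.id_apply, ContinuousLinearMap.coe_coe]
        rw [h4]
        rfl
      have hrneg : finrank ℝ (LinearMap.range ((H₂ - H₁ :
          EuclideanSpace ℝ (Fin n) →L[ℝ] EuclideanSpace ℝ (Fin n)) :
          EuclideanSpace ℝ (Fin n) →ₗ[ℝ] EuclideanSpace ℝ (Fin n))) = r := by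
      
        rw [hr]
        have : (H₂ - H₁ : EuclideanSpace ℝ (Fin n) →L[ℝ] EuclideanSpace ℝ (Fin n)) =
            -(H₁ - H₂) := by abel
        rw [this]
        have hcoe : ((-(H₁ - H₂) : EuclideanSpace ℝ (Fin n) →L[ℝ] EuclideanSpace ℝ (Fin n)) :
            EuclideanSpace ℝ (Fin n) →ₗ[ℝ] EuclideanSpace ℝ (Fin n)) =
            -((H₁ - H₂ : EuclideanSpace ℝ (Fin n) →L[ℝ] EuclideanSpace ℝ (Fin n)) :
            EuclideanSpace ℝ (Fin n) →ₗ[ℝ] EuclideanSpace ℝ (Fin n)) := rfl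
        rw [hcoe, LinearMap.range_neg]
      rw [h2]
      calc finrank ℝ (LinearMap.range ((((↑u₁⁻¹ : EuclideanSpace ℝ (Fin n) →L[ℝ]
          EuclideanSpace ℝ (Fin n)) * (H₂ - H₁)) : EuclideanSpace ℝ (Fin n) →L[ℝ]
          EuclideanSpace ℝ (Fin n)) : EuclideanSpace ℝ (Fin n) →ₗ[ℝ] EuclideanSpace ℝ (Fin n)))
          ≤ finrank ℝ (LinearMap.range ((H₂ - H₁ :
            EuclideanSpace ℝ (Fin n) →L[ℝ] EuclideanSpace ℝ (Fin n)) :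
            EuclideanSpace ℝ (Fin n) →ₗ[ℝ] EuclideanSpace ℝ (Fin n))) := hrank u₁⁻¹ (H₂ - H₁)
        _ = r := hrneg
    -- determinant bounds
    have hdetG : |LinearMap.det (G : EuclideanSpace ℝ (Fin n) →ₗ[ℝ] EuclideanSpace ℝ (Fin n))| ≤
        Real.exp (r * (2 * Mx)) := by
      calc |LinearMap.det (G : EuclideanSpace ℝ (Fin n) →ₗ[ℝ] EuclideanSpace ℝ (Fin n))|
          ≤ c ^ (finrank ℝ (LinearMap.range
            ((G : EuclideanSpace ℝ (Fin n) →ₗ[ℝ] EuclideanSpace ℝ (Fin n)) - LinearMap.id))) :=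
            aux_det_le_rank G c hc0 hGnorm
        _ ≤ c ^ r := pow_le_pow_right₀ hc1 hGrank
        _ = Real.exp (r * (2 * Mx)) := (Real.exp_nat_mul _ r).symm
    have hdetG' : |LinearMap.det (G' : EuclideanSpace ℝ (Fin n) →ₗ[ℝ] EuclideanSpace ℝ (Fin n))| ≤
        Real.exp (r * (2 * Mx)) := by
      calc |LinearMap.det (G' : EuclideanSpace ℝ (Fin n) →ₗ[ℝ] EuclideanSpace ℝ (Fin n))|
          ≤ c ^ (finrank ℝ (LinearMap.range
            ((G' : EuclideanSpace ℝ (Fin n) →ₗ[ℝ] EuclideanSpace ℝ (Fin n)) - LinearMap.id))) :=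
            aux_det_le_rank G' c hc0 hG'norm
        _ ≤ c ^ r := pow_le_pow_right₀ hc1 hG'rank
        _ = Real.exp (r * (2 * Mx)) := (Real.exp_nat_mul _ r).symm
    -- determinant identities
    have hcomp : (↑u₂ : EuclideanSpace ℝ (Fin n) →L[ℝ] EuclideanSpace ℝ (Fin n)) * G = ↑u₁ := by
      rw [hG, ← mul_assoc, u₂.mul_inv, one_mul]
    have hcomp' : (↑u₁ : EuclideanSpace ℝ (Fin n) →L[ℝ] EuclideanSpace ℝ (Fin n)) * G' = ↑u₂ := by
      rw [hG', ← mul_assoc, u₁.mul_inv, one_mul]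
    have hdetmul : ∀ (f g : EuclideanSpace ℝ (Fin n) →L[ℝ] EuclideanSpace ℝ (Fin n)),
        LinearMap.det (((f * g) : EuclideanSpace ℝ (Fin n) →L[ℝ] EuclideanSpace ℝ (Fin n)) :
          EuclideanSpace ℝ (Fin n) →ₗ[ℝ] EuclideanSpace ℝ (Fin n)) =
        LinearMap.det ((f : EuclideanSpace ℝ (Fin n) →L[ℝ] EuclideanSpace ℝ (Fin n)) :
          EuclideanSpace ℝ (Fin n) →ₗ[ℝ] EuclideanSpace ℝ (Fin n)) *
        LinearMap.det ((g : EuclideanSpace ℝ (Fin n) →L[ℝ] EuclideanSpace ℝ (Fin n)) :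
          EuclideanSpace ℝ (Fin n) →ₗ[ℝ] EuclideanSpace ℝ (Fin n)) := by
      intro f g
      have : (((f * g) : EuclideanSpace ℝ (Fin n) →L[ℝ] EuclideanSpace ℝ (Fin n)) :
          EuclideanSpace ℝ (Fin n) →ₗ[ℝ] EuclideanSpace ℝ (Fin n)) =
          (f : EuclideanSpace ℝ (Fin n) →ₗ[ℝ] EuclideanSpace ℝ (Fin n)) ∘ₗ
          (g : EuclideanSpace ℝ (Fin n) →ₗ[ℝ] EuclideanSpace ℝ (Fin n)) := rfl
      rw [this, LinearMap.det_comp]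
    have hdu : ∀ (u : (EuclideanSpace ℝ (Fin n) →L[ℝ] EuclideanSpace ℝ (Fin n))ˣ),
        LinearMap.det ((↑u : EuclideanSpace ℝ (Fin n) →L[ℝ] EuclideanSpace ℝ (Fin n)) :
          EuclideanSpace ℝ (Fin n) →ₗ[ℝ] EuclideanSpace ℝ (Fin n)) ≠ 0 := by
      intro u
      have h1 := hdetmul ↑u ↑u⁻¹
      rw [u.mul_inv] at h1
      have h2 : LinearMap.det (((1 : EuclideanSpace ℝ (Fin n) →L[ℝ] EuclideanSpace ℝ (Fin n))) :
          EuclideanSpace ℝ (Fin n) →ₗ[ℝ] EuclideanSpace ℝ (Fin n)) = 1 := by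
        have : (((1 : EuclideanSpace ℝ (Fin n) →L[ℝ] EuclideanSpace ℝ (Fin n))) :
            EuclideanSpace ℝ (Fin n) →ₗ[ℝ] EuclideanSpace ℝ (Fin n)) = LinearMap.id := rfl
        rw [this, LinearMap.det_id]
      rw [h2] at h1
      exact left_ne_zero_of_mul_eq_one h1.symm
    have hdet1 : LinearMap.det ((↑u₁ : EuclideanSpace ℝ (Fin n) →L[ℝ] EuclideanSpace ℝ (Fin n)) :
        EuclideanSpace ℝ (Fin n) →ₗ[ℝ] EuclideanSpace ℝ (Fin n)) =
        LinearMap.det ((↑u₂ : EuclideanSpace ℝ (Fin n) →L[ℝ] EuclideanSpace ℝ (Fin n)) :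
        EuclideanSpace ℝ (Fin n) →ₗ[ℝ] EuclideanSpace ℝ (Fin n)) *
        LinearMap.det (G : EuclideanSpace ℝ (Fin n) →ₗ[ℝ] EuclideanSpace ℝ (Fin n)) := by
      rw [← hcomp]
      exact hdetmul _ _
    have hdet2 : LinearMap.det ((↑u₂ : EuclideanSpace ℝ (Fin n) →L[ℝ] EuclideanSpace ℝ (Fin n)) :
        EuclideanSpace ℝ (Fin n) →ₗ[ℝ] EuclideanSpace ℝ (Fin n)) =
        LinearMap.det ((↑u₁ : EuclideanSpace ℝ (Fin n) →L[ℝ] EuclideanSpace ℝ (Fin n)) :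
        EuclideanSpace ℝ (Fin n) →ₗ[ℝ] EuclideanSpace ℝ (Fin n)) *
        LinearMap.det (G' : EuclideanSpace ℝ (Fin n) →ₗ[ℝ] EuclideanSpace ℝ (Fin n)) := by
      rw [← hcomp']
      exact hdetmul _ _
    have hdGne : LinearMap.det (G : EuclideanSpace ℝ (Fin n) →ₗ[ℝ] EuclideanSpace ℝ (Fin n)) ≠ 0 := by
      intro h
      exact hdu u₁ (by rw [hdet1, h, mul_zero])
    have hdG'ne : LinearMap.det (G' : EuclideanSpace ℝ (Fin n) →ₗ[ℝ] EuclideanSpace ℝ (Fin n)) ≠ 0 := by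
      intro h
      exact hdu u₂ (by rw [hdet2, h, mul_zero])
    have hGG' : LinearMap.det (G : EuclideanSpace ℝ (Fin n) →ₗ[ℝ] EuclideanSpace ℝ (Fin n)) *
        LinearMap.det (G' : EuclideanSpace ℝ (Fin n) →ₗ[ℝ] EuclideanSpace ℝ (Fin n)) = 1 := by
      have h1 := hdet2
      rw [hdet1] at h1
      have h2 : LinearMap.det ((↑u₂ : EuclideanSpace ℝ (Fin n) →L[ℝ] EuclideanSpace ℝ (Fin n)) :
          EuclideanSpace ℝ (Fin n) →ₗ[ℝ] EuclideanSpace ℝ (Fin n)) * 1 =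
          LinearMap.det ((↑u₂ : EuclideanSpace ℝ (Fin n) →L[ℝ] EuclideanSpace ℝ (Fin n)) :
          EuclideanSpace ℝ (Fin n) →ₗ[ℝ] EuclideanSpace ℝ (Fin n)) *
          (LinearMap.det (G : EuclideanSpace ℝ (Fin n) →ₗ[ℝ] EuclideanSpace ℝ (Fin n)) *
          LinearMap.det (G' : EuclideanSpace ℝ (Fin n) →ₗ[ℝ] EuclideanSpace ℝ (Fin n))) := by
        rw [mul_one, ← mul_assoc]
        exact h1
      exact (mul_left_cancel₀ (hdu u₂) h2).symm
    -- rewrite the goal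
    rw [← hu₁, ← hu₂]
    have habsne : ∀ (x : ℝ), x ≠ 0 → |x| ≠ 0 := fun x hx => abs_ne_zero.mpr hx
    have hlogeq : Real.log |LinearMap.det ((↑u₁ : EuclideanSpace ℝ (Fin n) →L[ℝ]
        EuclideanSpace ℝ (Fin n)) : EuclideanSpace ℝ (Fin n) →ₗ[ℝ] EuclideanSpace ℝ (Fin n))| =
        Real.log |LinearMap.det ((↑u₂ : EuclideanSpace ℝ (Fin n) →L[ℝ]
        EuclideanSpace ℝ (Fin n)) : EuclideanSpace ℝ (Fin n) →ₗ[ℝ] EuclideanSpace ℝ (Fin n))| +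
        Real.log |LinearMap.det (G : EuclideanSpace ℝ (Fin n) →ₗ[ℝ] EuclideanSpace ℝ (Fin n))| := by
      rw [hdet1, abs_mul]
      exact Real.log_mul (habsne _ (hdu u₂)) (habsne _ hdGne)
    rw [hlogeq]
    have hlogG' : Real.log |LinearMap.det (G : EuclideanSpace ℝ (Fin n) →ₗ[ℝ]
        EuclideanSpace ℝ (Fin n))| +
        Real.log |LinearMap.det (G' : EuclideanSpace ℝ (Fin n) →ₗ[ℝ]
        EuclideanSpace ℝ (Fin n))| = 0 := by
      rw [← Real.log_mul (habsne _ hdGne) (habsne _ hdG'ne), ← abs_mul, hGG', abs_one,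
        Real.log_one]
    have hup : Real.log |LinearMap.det (G : EuclideanSpace ℝ (Fin n) →ₗ[ℝ]
        EuclideanSpace ℝ (Fin n))| ≤ r * (2 * Mx) :=
      (Real.log_le_iff_le_exp (abs_pos.mpr hdGne)).mpr hdetG
    have hup' : Real.log |LinearMap.det (G' : EuclideanSpace ℝ (Fin n) →ₗ[ℝ]
        EuclideanSpace ℝ (Fin n))| ≤ r * (2 * Mx) :=
      (Real.log_le_iff_le_exp (abs_pos.mpr hdG'ne)).mpr hdetG'
    have hfinal : abs (Real.log (abs (LinearMap.det (G : EuclideanSpace ℝ (Fin n) →ₗ[ℝ]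
        EuclideanSpace ℝ (Fin n))))) ≤ r * (2 * Mx) := by
      rw [abs_le]
      constructor
      · linarith
      · exact hup
    have hsimp : Real.log |LinearMap.det ((↑u₂ : EuclideanSpace ℝ (Fin n) →L[ℝ]
        EuclideanSpace ℝ (Fin n)) : EuclideanSpace ℝ (Fin n) →ₗ[ℝ] EuclideanSpace ℝ (Fin n))| +
        Real.log |LinearMap.det (G : EuclideanSpace ℝ (Fin n) →ₗ[ℝ] EuclideanSpace ℝ (Fin n))| -
        Real.log |LinearMap.det ((↑u₂ : EuclideanSpace ℝ (Fin n) →L[ℝ]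
        EuclideanSpace ℝ (Fin n)) : EuclideanSpace ℝ (Fin n) →ₗ[ℝ] EuclideanSpace ℝ (Fin n))| =
        Real.log |LinearMap.det (G : EuclideanSpace ℝ (Fin n) →ₗ[ℝ] EuclideanSpace ℝ (Fin n))| := by
      ring
    rw [hsimp]
    calc abs (Real.log (abs (LinearMap.det (G : EuclideanSpace ℝ (Fin n) →ₗ[ℝ]
        EuclideanSpace ℝ (Fin n))))) ≤ r * (2 * Mx) := hfinal
      _ ≤ 4 * r * Mx := by
          have hrc : (0:ℝ) ≤ (r:ℝ) := Nat.cast_nonneg r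
          nlinarith [mul_nonneg hrc hM0]
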